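/- arXiv:2501.12876 — 4 statements merged into one kernel-verified Lean document; each statement's English description precedes it below -/
import Mathlib

section
/- Let H ⊆ C(K,E) be a linear subspace separating points of K. For s, t ∈ K and α ∈ 𝔽, the following are equivalent: (a) h(t) = α·h(s) for all h ∈ H; (b) f(t) = α·f(s) for all f ∈ H_w. In particular, the vector-valued evaluation map satisfies φ_H(t) = α φ_H(s) iff φ_{H_w}(t) = α φ_{H_w}(s). -/
open ContinuousMap

/-- for a point-separating subspace `H ⊆ C(K,E)`, `s, t ∈ K` and a scalar `α`,
one has `h(t) = α • h(s)` for all `h ∈ H` iff `f(t) = α * f(s)` for all `f ∈ H_w`;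
i.e. `φ_H(t) = α φ_H(s)` iff `φ_{H_w}(t) = α φ_{H_w}(s)`. -/
theorem stmt_5 {𝕜 K E : Type*} [RCLike 𝕜] [TopologicalSpace K] [CompactSpace K] [T2Space K]
    [NormedAddCommGroup E] [NormedSpace 𝕜 E] [CompleteSpace E]
    (H : Submodule 𝕜 C(K, E))
    (hsep : ∀ s t : K, s ≠ t → ∃ f ∈ H, f s ≠ f t)
    (s t : K) (α : 𝕜) :
    (∀ h ∈ H, h t = α • h s) ↔
      (∀ g ∈ Submodule.span 𝕜
          {g : C(K, 𝕜) | ∃ f ∈ H, ∃ x : E →L[𝕜] 𝕜, ∀ u : K, g u = x (f u)},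
        g t = α * g s) := by
  constructor
  · intro hH g hg
    induction hg using Submodule.span_induction with
    | mem g hg =>
      obtain ⟨f, hf, x, hx⟩ := hg
      rw [hx t, hx s, hH f hf, map_smul, smul_eq_mul]
    | zero => simp
    | add g₁ g₂ _ _ h₁ h₂ => simp [h₁, h₂]; ring
    | smul c g _ h => simp [h]; ring
  · intro hw h hh
    have key : ∀ x : E →L[𝕜] 𝕜, x (h t - α • h s) = 0 := by
      intro x
      have hg : (⟨fun u => x (h u), x.continuous.comp h.continuous⟩ : C(K, 𝕜)) ∈
          Submodule.span 𝕜
            {g : C(K, 𝕜) | ∃ f ∈ H, ∃ x : E →L[𝕜] 𝕜, ∀ u : K, g u = x (f u)} :=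
        Submodule.subset_span ⟨h, hh, x, fun u => rfl⟩
      have := hw _ hg
      simp only [ContinuousMap.coe_mk] at this
      simp [map_sub, map_smul, this, smul_eq_mul]
    rw [← sub_eq_zero]
    exact NormedSpace.eq_zero_of_forall_dual_eq_zero 𝕜 key
end

section
/- Let K = {0,1}, E = 𝔽² with the sup norm, H = {f = (f₁,f₂) ∈ C(K,E) : f₁(0) = 0}. Then the evaluation operator φ_H(0) ∈ L(H,E) is not an extreme point of the unit ball of L(H,E): indeed, the operators U₁(f) = (f₁(1), f₂(0)) and U₂(f) = (−f₁(1), f₂(0)) both have norm ≤ 1, are distinct, and satisfy φ_H(0) = ½(U₁ + U₂). -/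
open ContinuousMap

/-- The function space `H = {f ∈ C({0,1}, 𝔽²) : f₁(0) = 0}` with `E = (𝔽², ‖·‖_∞)`. -/
def H14 : Submodule ℝ C(Fin 2, Fin 2 → ℝ) where
  carrier := {f | f 0 0 = 0}
  add_mem' := by
    intro f g hf hg
    simp only [Set.mem_setOf_eq, ContinuousMap.add_apply, Pi.add_apply] at *
    rw [hf, hg]; ring
  zero_mem' := by simp
  smul_mem' := by
    intro c f hf
    simp only [Set.mem_setOf_eq, ContinuousMap.smul_apply, Pi.smul_apply,
      smul_eq_mul] at *
    rw [hf]; ring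

noncomputable instance : NormedAddCommGroup ↥H14 := inferInstance

noncomputable instance : NormedSpace ℝ ↥H14 := inferInstance

noncomputable def Uaux (s : ℝ) : ↥H14 →L[ℝ] (Fin 2 → ℝ) :=
  LinearMap.mkContinuous
    { toFun := fun f => ![s * (f : C(Fin 2, Fin 2 → ℝ)) 1 0, (f : C(Fin 2, Fin 2 → ℝ)) 0 1]
      map_add' := by intro f g; ext i; fin_cases i <;> simp <;> ring
      map_smul' := by intro c f; ext i; fin_cases i <;> simp <;> ring }
    (max |s| 1)
    (by
      intro f
      rw [pi_norm_le_iff_of_nonneg (by positivity)]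
      intro i
      have h1 : ‖(f : C(Fin 2, Fin 2 → ℝ)) 1 0‖ ≤ ‖f‖ :=
        le_trans (norm_le_pi_norm _ 0) ((f : C(Fin 2, Fin 2 → ℝ)).norm_coe_le_norm 1)
      have h0 : ‖(f : C(Fin 2, Fin 2 → ℝ)) 0 1‖ ≤ ‖f‖ :=
        le_trans (norm_le_pi_norm _ 1) ((f : C(Fin 2, Fin 2 → ℝ)).norm_coe_le_norm 0)
      have hf : (0:ℝ) ≤ ‖f‖ := norm_nonneg _
      fin_cases i
      · show ‖s * (f : C(Fin 2, Fin 2 → ℝ)) 1 0‖ ≤ _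
        rw [norm_mul, Real.norm_eq_abs]
        calc |s| * ‖(f : C(Fin 2, Fin 2 → ℝ)) 1 0‖ ≤ |s| * ‖f‖ := by
              exact mul_le_mul_of_nonneg_left h1 (abs_nonneg s)
          _ ≤ max |s| 1 * ‖f‖ := by
              exact mul_le_mul_of_nonneg_right (le_max_left _ _) hf
      · show ‖(f : C(Fin 2, Fin 2 → ℝ)) 0 1‖ ≤ _
        calc ‖(f : C(Fin 2, Fin 2 → ℝ)) 0 1‖ ≤ ‖f‖ := h0
          _ ≤ max |s| 1 * ‖f‖ := by nlinarith [le_max_right |s| (1:ℝ)])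

theorem Uaux_apply (s : ℝ) (f : ↥H14) :
    Uaux s f = ![s * (f : C(Fin 2, Fin 2 → ℝ)) 1 0, (f : C(Fin 2, Fin 2 → ℝ)) 0 1] := rfl
set_option synthInstance.maxHeartbeats 400000 in
set_option maxHeartbeats 1000000 in
noncomputable def gelt : ↥H14 :=
  ⟨⟨fun x => ![if x = 1 then 1 else 0, 0], continuous_of_discreteTopology⟩, by
    show (![if (0:Fin 2) = 1 then (1:ℝ) else 0, 0]) 0 = 0
    norm_num⟩

set_option synthInstance.maxHeartbeats 400000 in
set_option maxHeartbeats 1000000 in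
/-- for `K = {0,1}`, `E = (𝔽²,‖·‖_∞)` and
`H = {f ∈ C(K,E) : f₁(0) = 0}`, the evaluation operator `φ_H(0)` is not an extreme point of
the unit ball of `L(H,E)`: the distinct norm-≤1 operators `U₁(f) = (f₁(1), f₂(0))` and
`U₂(f) = (−f₁(1), f₂(0))` average to `φ_H(0)`. -/
theorem stmt_14 (Φ : ↥H14 →L[ℝ] (Fin 2 → ℝ))
    (hΦ : ∀ f : ↥H14, Φ f = (f : C(Fin 2, Fin 2 → ℝ)) 0) :
    Φ ∉ Set.extremePoints ℝ (Metric.closedBall (0 : ↥H14 →L[ℝ] (Fin 2 → ℝ)) 1) ∧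
      ∃ U₁ U₂ : ↥H14 →L[ℝ] (Fin 2 → ℝ), U₁ ≠ U₂ ∧ ‖U₁‖ ≤ 1 ∧ ‖U₂‖ ≤ 1 ∧
        (∀ f : ↥H14, U₁ f
          = ![(f : C(Fin 2, Fin 2 → ℝ)) 1 0, (f : C(Fin 2, Fin 2 → ℝ)) 0 1]) ∧
        (∀ f : ↥H14, U₂ f
          = ![-(f : C(Fin 2, Fin 2 → ℝ)) 1 0, (f : C(Fin 2, Fin 2 → ℝ)) 0 1]) ∧
        Φ = (1 / 2 : ℝ) • (U₁ + U₂) := by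
  set U₁ := Uaux 1 with hU₁
  set U₂ := Uaux (-1) with hU₂
  have hU₁app : ∀ f : ↥H14, U₁ f
      = ![(f : C(Fin 2, Fin 2 → ℝ)) 1 0, (f : C(Fin 2, Fin 2 → ℝ)) 0 1] := by
    intro f
    rw [hU₁, Uaux_apply]
    norm_num
  have hU₂app : ∀ f : ↥H14, U₂ f
      = ![-(f : C(Fin 2, Fin 2 → ℝ)) 1 0, (f : C(Fin 2, Fin 2 → ℝ)) 0 1] := by
    intro f
    rw [hU₂, Uaux_apply]
    norm_num
  have hne : U₁ ≠ U₂ := by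
    intro h
    have this : U₁ gelt 0 = U₂ gelt 0 := by rw [h]
    rw [hU₁app, hU₂app] at this
    simp only [Matrix.cons_val_zero] at this
    have hg : (gelt : C(Fin 2, Fin 2 → ℝ)) 1 0 = 1 := by
      show (![if (1:Fin 2) = 1 then (1:ℝ) else 0, 0]) 0 = 1
      norm_num
    rw [hg] at this
    norm_num at this
  have hn1 : ‖U₁‖ ≤ 1 := by
    have h : ‖Uaux 1‖ ≤ max |(1:ℝ)| 1 := LinearMap.mkContinuous_norm_le _ (by positivity) _
    rw [show max |(1:ℝ)| 1 = 1 by norm_num] at h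
    exact h
  have hn2 : ‖U₂‖ ≤ 1 := by
    have h : ‖Uaux (-1)‖ ≤ max |(-1:ℝ)| 1 := LinearMap.mkContinuous_norm_le _ (by positivity) _
    rw [show max |(-1:ℝ)| 1 = 1 by norm_num] at h
    exact h
  have havg : Φ = (1 / 2 : ℝ) • (U₁ + U₂) := by
    ext f i
    rw [hΦ]
    simp only [ContinuousLinearMap.smul_apply, ContinuousLinearMap.add_apply,
      hU₁app, hU₂app, Pi.smul_apply, Pi.add_apply, smul_eq_mul]
    have hmem : (f : C(Fin 2, Fin 2 → ℝ)) 0 0 = 0 := f.2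
    fin_cases i
    · show (f : C(Fin 2, Fin 2 → ℝ)) 0 0 = _
      rw [hmem]
      norm_num
    · show (f : C(Fin 2, Fin 2 → ℝ)) 0 1 = _
      norm_num
      ring
  refine ⟨?_, U₁, U₂, hne, hn1, hn2, hU₁app, hU₂app, havg⟩
  intro h
  have hmem1 : U₁ ∈ Metric.closedBall (0 : ↥H14 →L[ℝ] (Fin 2 → ℝ)) 1 :=
    mem_closedBall_zero_iff (E := ↥H14 →L[ℝ] (Fin 2 → ℝ)) |>.2 hn1
  have hmem2 : U₂ ∈ Metric.closedBall (0 : ↥H14 →L[ℝ] (Fin 2 → ℝ)) 1 :=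
    mem_closedBall_zero_iff (E := ↥H14 →L[ℝ] (Fin 2 → ℝ)) |>.2 hn2
  have hseg : Φ ∈ openSegment ℝ U₁ U₂ :=
    ⟨1/2, 1/2, by norm_num, by norm_num, by norm_num, by
      rw [havg]; rw [smul_add]⟩
  obtain ⟨h1, h2⟩ := (mem_extremePoints.1 h).2 _ hmem1 _ hmem2 hseg
  exact hne (h1.trans h2.symm)
end

section
/- Let X be a compact convex subset of a Hausdorff locally convex space and E a Banach space. Let g : X → E be an affine map such that for every x* ∈ E* the composition x* ∘ g is continuous on X. Then g is norm-continuous on X. (Key step: if s_i → s in X but ∥g(s_i) − g(s)∥ ≥ ε, choose norming functionals in B_{E*} and extract a weak*-convergent subnet to derive a contradiction using that x* ∘ g is continuous and bounded nets of functionals converge uniformly on norm-compact sets.) -/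
/-- formalizable version: let `X` be a compact convex subset of a Hausdorff
locally convex space, `E` a Banach space and `g : X → E` affine such that `x* ∘ g` is
continuous for every `x* ∈ E*` and `g(X)` is relatively norm-compact. Then `g` is
norm-continuous on `X`. -/
theorem stmt_16 {V E : Type*} [AddCommGroup V] [Module ℝ V] [TopologicalSpace V]
    [IsTopologicalAddGroup V] [ContinuousSMul ℝ V] [T2Space V] [LocallyConvexSpace ℝ V]
    [NormedAddCommGroup E] [NormedSpace ℝ E] [CompleteSpace E]
    (X : Set V) (hX : IsCompact X) (hconv : Convex ℝ X)
    (g : V → E)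
    (haff : ∀ x ∈ X, ∀ y ∈ X, ∀ t : ℝ, t ∈ Set.Icc (0 : ℝ) 1 →
      g (t • x + (1 - t) • y) = t • g x + (1 - t) • g y)
    (hweak : ∀ xs : E →L[ℝ] ℝ, ContinuousOn (fun v => xs (g v)) X)
    (hcomp : IsCompact (closure (g '' X))) :
    ContinuousOn g X := by
  rw [continuousOn_iff_continuous_restrict]
  set K := closure (g '' X) with hK
  have hKg : ∀ x : X, g (x : V) ∈ K := fun x => subset_closure ⟨x, x.2, rfl⟩
  haveI : CompactSpace K := isCompact_iff_compactSpace.mp hcomp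
  -- the map into the product of evaluations
  let ψ : K → ((E →L[ℝ] ℝ) → ℝ) := fun k f => f (k : E)
  have hψc : Continuous ψ := continuous_pi fun f => f.continuous.comp continuous_subtype_val
  have hψi : Function.Injective ψ := by
    intro a b hab
    have : ∀ f : E →L[ℝ] ℝ, f ((a : E) - b) = 0 := by
      intro f
      have := congrFun hab f
      simp only [ψ] at this
      simp [map_sub, this]
    ext
    by_contra hne
    obtain ⟨f, hf⟩ := SeparatingDual.exists_ne_zero (R := ℝ) (sub_ne_zero.mpr hne)
    exact hf (this f)
  have hemb := (hψc.isClosedEmbedding hψi).isInducing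
  let h : X → K := fun x => ⟨g (x : V), hKg x⟩
  have hh : Continuous h := by
    rw [hemb.continuous_iff]
    exact continuous_pi fun f => (hweak f).restrict
  exact continuous_subtype_val.comp hh
end

section
/- Let E be a Banach space whose dual E* is strictly convex, K a compact Hausdorff space, H ⊆ C(K,E) a function space containing constants, t ∈ K, x* ∈ E* nonzero, and μ ∈ M(K,E*) with ∥μ∥ = ∥x*∥, μ(K) = x*, such that for every Borel A ⊆ K, |μ|(A) + |μ|(K∖A) = ∥μ(A)∥ + ∥μ(K∖A)∥ = ∥μ(A) + μ(K∖A)∥. Then there is a Radon probability measure σ on K with μ(A) = σ(A)·x* for all Borel A, i.e., μ = σ ⊗ x*. -/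
open ContinuousMap MeasureTheory

/-- let `E*` be strictly convex, `H ⊆ C(K,E)` a function space containing
constants, `x* ∈ E*` nonzero and `μ` an `E*`-valued measure with variation `τ = |μ|`,
total variation `‖μ‖ = ‖x*‖`, total mass `μ(K) = x*`, and such that for every Borel `A`,
`|μ|(A) + |μ|(Aᶜ) = ‖μ(A)‖ + ‖μ(Aᶜ)‖ = ‖μ(A) + μ(Aᶜ)‖`. Then there is a probability
measure `σ` on `K` with `μ(A) = σ(A)·x*` for all Borel `A`, i.e. `μ = σ ⊗ x*`. -/
theorem stmt_18 {K E : Type*} [TopologicalSpace K] [CompactSpace K] [T2Space K]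
    [MeasurableSpace K] [BorelSpace K]
    [NormedAddCommGroup E] [NormedSpace ℝ E]
    (hsc : ∀ u v : E →L[ℝ] ℝ, u ≠ 0 → v ≠ 0 → ‖u + v‖ = ‖u‖ + ‖v‖ →
      ∃ c : ℝ, 0 < c ∧ v = c • u)
    (H : Submodule ℝ C(K, E))
    (hconst : ∀ x : E, (ContinuousMap.const K x) ∈ H)
    (t : K) (xs : E →L[ℝ] ℝ) (hxs : xs ≠ 0)
    (μ : VectorMeasure K (E →L[ℝ] ℝ)) (τ : Measure K) [IsFiniteMeasure τ]
    (hτnorm : (τ Set.univ).toReal = ‖xs‖)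
    (hμuniv : μ Set.univ = xs)
    (hvar : ∀ A : Set K, MeasurableSet A →
      ((τ A).toReal + (τ Aᶜ).toReal = ‖μ A‖ + ‖μ Aᶜ‖ ∧
        ‖μ A‖ + ‖μ Aᶜ‖ = ‖μ A + μ Aᶜ‖)) :
    ∃ σ : Measure K, IsProbabilityMeasure σ ∧
      ∀ A : Set K, MeasurableSet A → μ A = (σ A).toReal • xs := by
  have hxsn : ‖xs‖ ≠ 0 := norm_ne_zero_iff.mpr hxs
  -- key structural fact: every value of μ is a nonnegative multiple of xs
  have key : ∀ A : Set K, MeasurableSet A → μ A = (‖μ A‖ / ‖xs‖) • xs := by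
    intro A hA
    have hadd : μ A + μ Aᶜ = xs := by
      rw [← VectorMeasure.of_union disjoint_compl_right hA hA.compl, Set.union_compl_self,
        hμuniv]
    by_cases hA0 : μ A = 0
    · simp [hA0]
    by_cases hAc0 : μ Aᶜ = 0
    · have : μ A = xs := by rw [← hadd, hAc0, add_zero]
      rw [this, div_self hxsn, one_smul]
    obtain ⟨c, hc, hcv⟩ := hsc (μ A) (μ Aᶜ) hA0 hAc0 (hvar A hA).2.symm
    have h1c : (0:ℝ) < 1 + c := by linarith
    have hμA : μ A = (1 + c)⁻¹ • xs := by
      have : (1 + c) • μ A = xs := by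
        rw [← hadd, hcv, add_smul, one_smul]
      rw [← this, smul_smul, inv_mul_cancel₀ h1c.ne', one_smul]
    have hnorm : ‖μ A‖ = (1 + c)⁻¹ * ‖xs‖ := by
      rw [hμA]
      exact norm_smul_of_nonneg (le_of_lt (inv_pos.mpr h1c)) xs
    rw [hnorm, hμA, mul_div_assoc, div_self hxsn, mul_one]
  -- pick a vector where xs is nonzero
  obtain ⟨e, he⟩ : ∃ e : E, xs e ≠ 0 := by
    by_contra h
    push_neg at h
    exact hxs (ContinuousLinearMap.ext fun x => by simp [h x])
  -- the scalar measure obtained by evaluating at e and normalizing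
  let f : (E →L[ℝ] ℝ) →+ ℝ :=
    { toFun := fun g => (xs e)⁻¹ * g e
      map_zero' := by simp
      map_add' := fun g h => by simp [mul_add] }
  have hf : Continuous f := by
    exact continuous_const.mul ((ContinuousLinearMap.apply ℝ ℝ e).continuous)
  let ν : SignedMeasure K := μ.mapRange f hf
  have hν : ∀ A : Set K, MeasurableSet A → ν A = ‖μ A‖ / ‖xs‖ := by
    intro A hA
    have h0 : ν A = (xs e)⁻¹ * ((μ A) e) := rfl
    have h1 : (μ A) e = (‖μ A‖ / ‖xs‖) * xs e := by
      conv_lhs => rw [key A hA]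
      rfl
    rw [h0, h1]
    field_simp
  have hνpos : (0 : VectorMeasure K ℝ) ≤[Set.univ] ν := by
    rw [VectorMeasure.restrict_le_restrict_iff _ _ MeasurableSet.univ]
    intro j hj _
    rw [VectorMeasure.zero_apply, hν j hj]
    positivity
  refine ⟨ν.toMeasureOfZeroLE Set.univ MeasurableSet.univ hνpos, ?_, ?_⟩
  · constructor
    rw [SignedMeasure.toMeasureOfZeroLE_apply _ hνpos MeasurableSet.univ MeasurableSet.univ]
    have : ν (Set.univ ∩ Set.univ) = 1 := by
      rw [Set.univ_inter, hν _ MeasurableSet.univ, hμuniv, div_self hxsn]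
    exact ENNReal.coe_eq_one.mpr (NNReal.eq (by simpa using this))
  · intro A hA
    rw [SignedMeasure.toMeasureOfZeroLE_apply _ hνpos MeasurableSet.univ hA]
    have h2 : ν (Set.univ ∩ A) = ‖μ A‖ / ‖xs‖ := by rw [Set.univ_inter, hν A hA]
    simp only [ENNReal.coe_toReal, NNReal.coe_mk, h2]
    exact key A hA
end
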